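/- Let p be a prime and n ≥ 1. Every g ∈ Sp_{2n}(ℚ_p) can be written as g = q · c(p) · k with q ∈ [P,P](ℚ_p), c ∈ ℤ, and k ∈ Sp_{2n}(ℤ_p), where c(p) := diag(p^{−c}, I_{n−1}, p^{c}, I_{n−1}); moreover the integer c is uniquely determined by g. Equivalently, Sp_{2n}(ℚ_p) is the disjoint union over c ∈ ℤ of the double cosets [P,P](ℚ_p)·c(p)·Sp_{2n}(ℤ_p). -/

import Mathlib

open Matrix

/-- The standard symplectic structure matrix `J = (0, Iₙ; -Iₙ, 0)`. -/
def Jmat (F : Type*) [Field F] (n : ℕ) : Matrix (Fin n ⊕ Fin n) (Fin n ⊕ Fin n) F :=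
  Matrix.fromBlocks 0 1 (-1) 0

/-- `Sp_{2n}(F) = {g : g * J⁻¹ * gᵀ * J = 1}`. -/
def Sp (F : Type*) [Field F] (n : ℕ) : Set (Matrix (Fin n ⊕ Fin n) (Fin n ⊕ Fin n) F) :=
  {g | g * (Jmat F n)⁻¹ * gᵀ * Jmat F n = 1}

/-- `[P,P](F)`: elements of `Sp_{2n}(F)` of block form `(A, B; 0, (Aᵀ)⁻¹)` with `det A = 1`. -/
def SiegelPP (F : Type*) [Field F] (n : ℕ) :
    Set (Matrix (Fin n ⊕ Fin n) (Fin n ⊕ Fin n) F) :=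
  {g | g ∈ Sp F n ∧ ∃ A B : Matrix (Fin n) (Fin n) F,
    g = Matrix.fromBlocks A B 0 Aᵀ⁻¹ ∧ A.det = 1}

/-- The diagonal matrix `c(x) = diag(x^{−c}, I_{n−1}, x^{c}, I_{n−1})`. -/
noncomputable def cMat (F : Type*) [Field F] (n : ℕ) (x : F) (c : ℤ) :
    Matrix (Fin n ⊕ Fin n) (Fin n ⊕ Fin n) F :=
  Matrix.diagonal (Sum.elim
    (fun i : Fin n => if (i : ℕ) = 0 then x ^ (-c) else 1)
    (fun i : Fin n => if (i : ℕ) = 0 then x ^ c else 1))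

namespace PadicIwasawaAux

/-! ### Symplectic linear algebra over a general field -/

section FieldPart

variable {F : Type*} [Field F] {n : ℕ}

/-- `J' = J⁻¹ = Jᵀ = -J`. -/
def Jinv (F : Type*) [Field F] (n : ℕ) : Matrix (Fin n ⊕ Fin n) (Fin n ⊕ Fin n) F :=
  Matrix.fromBlocks 0 (-1) 1 0

lemma J_mul_Jinv : Jmat F n * Jinv F n = 1 := by
  rw [Jmat, Jinv, fromBlocks_multiply, ← fromBlocks_one]
  congr 1 <;> simp

lemma Jinv_mul_J : Jinv F n * Jmat F n = 1 := by
  rw [Jmat, Jinv, fromBlocks_multiply, ← fromBlocks_one]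
  congr 1 <;> simp

lemma J_inv_eq : (Jmat F n)⁻¹ = Jinv F n := inv_eq_right_inv J_mul_Jinv

lemma J_transpose : (Jmat F n)ᵀ = Jinv F n := by
  rw [Jmat, Jinv, fromBlocks_transpose]; simp

lemma Jinv_transpose : (Jinv F n)ᵀ = Jmat F n := by
  rw [Jmat, Jinv, fromBlocks_transpose]; simp

lemma Jinv_eq_neg_J : Jinv F n = -(Jmat F n) := by
  rw [Jmat, Jinv, fromBlocks_neg]; simp

lemma J_eq_neg_Jinv : Jmat F n = -(Jinv F n) := by
  rw [Jinv_eq_neg_J, neg_neg]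

lemma mem_sp_iff {g : Matrix (Fin n ⊕ Fin n) (Fin n ⊕ Fin n) F} :
    g ∈ Sp F n ↔ g * Jinv F n * gᵀ = Jinv F n := by
  unfold Sp
  rw [Set.mem_setOf_eq, J_inv_eq]
  constructor
  · intro h
    have h2 := congrArg (· * Jinv F n) h
    simpa [mul_assoc, J_mul_Jinv] using h2
  · intro h
    rw [h, Jinv_mul_J]

lemma sp_mul {g h : Matrix (Fin n ⊕ Fin n) (Fin n ⊕ Fin n) F}
    (hg : g ∈ Sp F n) (hh : h ∈ Sp F n) : g * h ∈ Sp F n := by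
  rw [mem_sp_iff] at *
  rw [transpose_mul, show g * h * Jinv F n * (hᵀ * gᵀ) = g * (h * Jinv F n * hᵀ) * gᵀ by
    noncomm_ring, hh, hg]

/-- The explicit inverse of a symplectic matrix. -/
def spInv (g : Matrix (Fin n ⊕ Fin n) (Fin n ⊕ Fin n) F) :
    Matrix (Fin n ⊕ Fin n) (Fin n ⊕ Fin n) F :=
  Jinv F n * gᵀ * Jmat F n

lemma sp_mul_spInv {g : Matrix (Fin n ⊕ Fin n) (Fin n ⊕ Fin n) F} (hg : g ∈ Sp F n) :
    g * spInv g = 1 := by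
  have := hg
  unfold Sp at this
  rw [Set.mem_setOf_eq, J_inv_eq] at this
  rw [spInv, show g * (Jinv F n * gᵀ * Jmat F n) = g * Jinv F n * gᵀ * Jmat F n by
    noncomm_ring, this]

lemma spInv_mul_sp {g : Matrix (Fin n ⊕ Fin n) (Fin n ⊕ Fin n) F} (hg : g ∈ Sp F n) :
    spInv g * g = 1 :=
  mul_eq_one_comm.mp (sp_mul_spInv hg)

lemma sp_transpose_cond {g : Matrix (Fin n ⊕ Fin n) (Fin n ⊕ Fin n) F} (hg : g ∈ Sp F n) :
    gᵀ * Jinv F n * g = Jinv F n := by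
  have h1 : (Jinv F n * gᵀ * Jmat F n) * g = 1 := spInv_mul_sp hg
  have h2 : Jmat F n * (Jinv F n * gᵀ * Jmat F n * g) = Jmat F n * 1 := by rw [h1]
  have h3 : gᵀ * Jmat F n * g = Jmat F n := by
    rw [mul_one] at h2
    calc gᵀ * Jmat F n * g = 1 * (gᵀ * Jmat F n * g) := by rw [one_mul]
    _ = Jmat F n * Jinv F n * (gᵀ * Jmat F n * g) := by rw [J_mul_Jinv]
    _ = Jmat F n * (Jinv F n * gᵀ * Jmat F n * g) := by noncomm_ring
    _ = Jmat F n := h2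
  rw [Jinv_eq_neg_J]
  calc gᵀ * -Jmat F n * g = -(gᵀ * Jmat F n * g) := by noncomm_ring
  _ = -Jmat F n := by rw [h3]

lemma spInv_mem_sp {g : Matrix (Fin n ⊕ Fin n) (Fin n ⊕ Fin n) F} (hg : g ∈ Sp F n) :
    spInv g ∈ Sp F n := by
  rw [mem_sp_iff]
  rw [spInv]
  rw [show (Jinv F n * gᵀ * Jmat F n)ᵀ = Jinv F n * g * Jmat F n by
    simp [transpose_mul, J_transpose, Jinv_transpose, mul_assoc]]
  calc Jinv F n * gᵀ * Jmat F n * Jinv F n * (Jinv F n * g * Jmat F n)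
      = Jinv F n * gᵀ * (Jmat F n * Jinv F n) * (Jinv F n * g * Jmat F n) := by noncomm_ring
    _ = Jinv F n * (gᵀ * Jinv F n * g) * Jmat F n := by rw [J_mul_Jinv]; try noncomm_ring
    _ = Jinv F n * Jinv F n * Jmat F n := by rw [sp_transpose_cond hg]; try noncomm_ring
    _ = Jinv F n := by rw [mul_assoc, Jinv_mul_J, mul_one]

lemma sp_diag_pair {v w : Fin n → F} (h : ∀ i, v i * w i = 1) :
    fromBlocks (diagonal v) 0 0 (diagonal w) ∈ Sp F n := by
  have hvw : diagonal v * diagonal w = 1 := by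
    rw [diagonal_mul_diagonal]
    have h1 : (fun i => v i * w i) = fun _ => (1 : F) := funext fun i => h i
    rw [h1]
    exact diagonal_one
  have hwv : diagonal w * diagonal v = 1 := by
    rw [diagonal_mul_diagonal]
    have h1 : (fun i => w i * v i) = fun _ => (1 : F) := funext fun i => by
      rw [mul_comm]; exact h i
    rw [h1]
    exact diagonal_one
  rw [mem_sp_iff, Jinv, fromBlocks_transpose, fromBlocks_multiply, fromBlocks_multiply]
  rw [diagonal_transpose, diagonal_transpose, transpose_zero]
  simp only [Matrix.mul_zero, Matrix.zero_mul, Matrix.mul_one, Matrix.mul_neg,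
    Matrix.neg_mul, add_zero, zero_add, Matrix.one_mul, hvw, hwv, neg_zero]

/-- The matrix `(0 | 1)` selecting the bottom row block. -/
def Rmat (F : Type*) [Field F] (n : ℕ) : Matrix (Fin n) (Fin n ⊕ Fin n) F :=
  fromCols 0 1

/-- The symplectic pairing of two row blocks. -/
def bform {m m' : Type*} (X : Matrix m (Fin n ⊕ Fin n) F) (Y : Matrix m' (Fin n ⊕ Fin n) F) :
    Matrix m m' F :=
  X * Jinv F n * Yᵀ

lemma bform_add_left {m m' : Type*} (X X' : Matrix m (Fin n ⊕ Fin n) F)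
    (Y : Matrix m' (Fin n ⊕ Fin n) F) : bform (X + X') Y = bform X Y + bform X' Y := by
  rw [bform, bform, bform, Matrix.add_mul, Matrix.add_mul]

lemma bform_add_right {m m' : Type*} (X : Matrix m (Fin n ⊕ Fin n) F)
    (Y Y' : Matrix m' (Fin n ⊕ Fin n) F) : bform X (Y + Y') = bform X Y + bform X Y' := by
  rw [bform, bform, bform, transpose_add, Matrix.mul_add]

lemma bform_smul_left {m m' l : Type*} [Fintype m] (S : Matrix l m F)
    (X : Matrix m (Fin n ⊕ Fin n) F) (Y : Matrix m' (Fin n ⊕ Fin n) F) :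
    bform (S * X) Y = S * bform X Y := by
  rw [bform, bform]
  simp only [Matrix.mul_assoc]

lemma bform_smul_right {m m' l : Type*} [Fintype m'] (S : Matrix l m' F)
    (X : Matrix m (Fin n ⊕ Fin n) F) (Y : Matrix m' (Fin n ⊕ Fin n) F) :
    bform X (S * Y) = bform X Y * Sᵀ := by
  rw [bform, bform, transpose_mul]
  simp only [Matrix.mul_assoc]

lemma bform_transpose {m m' : Type*} (X : Matrix m (Fin n ⊕ Fin n) F)
    (Y : Matrix m' (Fin n ⊕ Fin n) F) : (bform X Y)ᵀ = -bform Y X := by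
  rw [bform, bform, transpose_mul, transpose_mul, transpose_transpose, Jinv_transpose,
    J_eq_neg_Jinv]
  simp only [Matrix.mul_assoc, Matrix.neg_mul, Matrix.mul_neg, neg_neg]

lemma mem_sp_iff_bform {g : Matrix (Fin n ⊕ Fin n) (Fin n ⊕ Fin n) F} :
    g ∈ Sp F n ↔ bform g g = Jinv F n := mem_sp_iff

end FieldPart

section PadicPart

variable {p : ℕ} [hp : Fact p.Prime]

/-- A matrix over `ℚ_p` is integral if all its entries have norm at most `1`. -/
def MInt {a b : Type*} (A : Matrix a b ℚ_[p]) : Prop := ∀ i j, ‖A i j‖ ≤ 1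

lemma mInt_map {a b : Type*} (A : Matrix a b ℤ_[p]) :
    MInt (A.map (PadicInt.Coe.ringHom (p := p))) := by
  intro i j
  exact PadicInt.norm_le_one (A i j)

lemma mInt_lift {a b : Type*} (A : Matrix a b ℚ_[p]) (h : MInt A) :
    ∃ A' : Matrix a b ℤ_[p], A'.map (PadicInt.Coe.ringHom (p := p)) = A := by
  refine ⟨Matrix.of fun i j => ⟨A i j, h i j⟩, ?_⟩
  ext i j
  rfl

lemma mInt_mul {a b c : Type*} [Fintype b] {A : Matrix a b ℚ_[p]} {B : Matrix b c ℚ_[p]}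
    (hA : MInt A) (hB : MInt B) : MInt (A * B) := by
  obtain ⟨A', rfl⟩ := mInt_lift A hA
  obtain ⟨B', rfl⟩ := mInt_lift B hB
  rw [← Matrix.map_mul]
  exact mInt_map _

lemma mInt_det {a : Type*} [Fintype a] [DecidableEq a] {A : Matrix a a ℚ_[p]}
    (hA : MInt A) : ‖A.det‖ ≤ 1 := by
  obtain ⟨A', rfl⟩ := mInt_lift A hA
  rw [show A'.map ⇑(PadicInt.Coe.ringHom (p := p)) =
    (PadicInt.Coe.ringHom (p := p)).mapMatrix A' from rfl, ← RingHom.map_det]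
  exact PadicInt.norm_le_one _

lemma mInt_add {a b : Type*} {A B : Matrix a b ℚ_[p]} (hA : MInt A) (hB : MInt B) :
    MInt (A + B) := by
  intro i j
  refine le_trans (Padic.nonarchimedean _ _) (max_le (hA i j) (hB i j))

lemma mInt_transpose {a b : Type*} {A : Matrix a b ℚ_[p]} (hA : MInt A) : MInt Aᵀ :=
  fun i j => hA j i

lemma mInt_one {a : Type*} [DecidableEq a] : MInt (1 : Matrix a a ℚ_[p]) := by
  intro i j
  rw [Matrix.one_apply]
  split <;> simp

lemma mInt_zero {a b : Type*} : MInt (0 : Matrix a b ℚ_[p]) := by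
  intro i j
  simp

lemma mInt_neg {a b : Type*} {A : Matrix a b ℚ_[p]} (hA : MInt A) : MInt (-A) := by
  intro i j
  simpa using hA i j

lemma mInt_fromRows {a b c : Type*} {A : Matrix a c ℚ_[p]} {B : Matrix b c ℚ_[p]}
    (hA : MInt A) (hB : MInt B) : MInt (fromRows A B) := by
  rintro (i | i) j
  · exact hA i j
  · exact hB i j

lemma mInt_fromColumns {a b c : Type*} {A : Matrix c a ℚ_[p]} {B : Matrix c b ℚ_[p]}
    (hA : MInt A) (hB : MInt B) : MInt (fromCols A B) := by
  rintro i (j | j)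
  · exact hA i j
  · exact hB i j

lemma mInt_fromBlocks {a b c d : Type*} {A : Matrix a c ℚ_[p]} {B : Matrix a d ℚ_[p]}
    {C : Matrix b c ℚ_[p]} {D : Matrix b d ℚ_[p]}
    (hA : MInt A) (hB : MInt B) (hC : MInt C) (hD : MInt D) :
    MInt (fromBlocks A B C D) := by
  rintro (i | i) (j | j)
  · exact hA i j
  · exact hB i j
  · exact hC i j
  · exact hD i j

lemma mInt_diagonal {a : Type*} [DecidableEq a] {v : a → ℚ_[p]} (hv : ∀ i, ‖v i‖ ≤ 1) :
    MInt (diagonal v) := by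
  intro i j
  rw [Matrix.diagonal_apply]
  split <;> simp_all

lemma mInt_J {n : ℕ} : MInt (Jmat ℚ_[p] n) := by
  rw [Jmat]
  exact mInt_fromBlocks mInt_zero mInt_one (mInt_neg mInt_one) mInt_zero

lemma mInt_Jinv {n : ℕ} : MInt (Jinv ℚ_[p] n) := by
  rw [Jinv]
  exact mInt_fromBlocks mInt_zero (mInt_neg mInt_one) mInt_one mInt_zero

lemma mInt_spInv {n : ℕ} {g : Matrix (Fin n ⊕ Fin n) (Fin n ⊕ Fin n) ℚ_[p]} (hg : MInt g) :
    MInt (spInv g) :=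
  mInt_mul (mInt_mul mInt_Jinv (mInt_transpose hg)) mInt_J

lemma one_lt_p_real : (1 : ℝ) < (p : ℝ) := by
  exact_mod_cast hp.out.one_lt

/-- Multiplying by a high power of `p` makes any element integral. -/
lemma norm_pow_mul_le (x : ℚ_[p]) (s : ℕ) (hs : (-x.valuation).toNat ≤ s) :
    ‖(p : ℚ_[p]) ^ s * x‖ ≤ 1 := by
  rcases eq_or_ne x 0 with rfl | hx
  · simp
  · rw [norm_mul, Padic.norm_p_pow, Padic.norm_eq_zpow_neg_valuation hx,
      ← zpow_add₀ (ne_of_gt (lt_trans zero_lt_one one_lt_p_real))]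
    apply zpow_le_one_of_nonpos₀ (le_of_lt one_lt_p_real)
    have : -x.valuation ≤ (s : ℤ) := le_trans (Int.self_le_toNat _) (by exact_mod_cast hs)
    omega

/-- Any matrix becomes integral after scaling by a power of `p`. -/
lemma exists_smul_mInt {a b : Type*} [Fintype a] [Fintype b]
    (A : Matrix a b ℚ_[p]) : ∃ s : ℕ, MInt (((p : ℚ_[p]) ^ s) • A) := by
  classical
  refine ⟨Finset.univ.sup (fun ij : a × b => (-(A ij.1 ij.2).valuation).toNat), ?_⟩
  intro i j
  rw [Matrix.smul_apply, smul_eq_mul]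
  exact norm_pow_mul_le _ _ (Finset.le_sup (f := fun ij : a × b =>
    (-(A ij.1 ij.2).valuation).toNat) (Finset.mem_univ (i, j)))

end PadicPart

section Maximizer

variable {p : ℕ} [hp : Fact p.Prime] {n : ℕ}

/-- There is an integral `X` maximizing `‖det (M₀ * X)‖`. -/
lemma exists_max_norm_det (M₀ : Matrix (Fin n) (Fin n ⊕ Fin n) ℚ_[p])
    (hex : ∃ X : Matrix (Fin n ⊕ Fin n) (Fin n) ℚ_[p], MInt X ∧ (M₀ * X).det ≠ 0) :
    ∃ X, MInt X ∧ (M₀ * X).det ≠ 0 ∧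
      ∀ X', MInt X' → ‖(M₀ * X').det‖ ≤ ‖(M₀ * X).det‖ := by
  classical
  obtain ⟨s, hs⟩ := exists_smul_mInt M₀
  have hppos : (0 : ℝ) < (p : ℝ) := lt_trans zero_lt_one one_lt_p_real
  have hbdd : ∀ X : Matrix (Fin n ⊕ Fin n) (Fin n) ℚ_[p], MInt X → (M₀ * X).det ≠ 0 →
      -(s * n : ℕ) ≤ ((M₀ * X).det).valuation := by
    intro X hX hdet
    have h1 : ‖((((p : ℚ_[p]) ^ s) • M₀) * X).det‖ ≤ 1 := mInt_det (mInt_mul hs hX)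
    have h2 : ((((p : ℚ_[p]) ^ s) • M₀) * X).det = (p : ℚ_[p]) ^ (s * n) * (M₀ * X).det := by
      rw [Matrix.smul_mul, Matrix.det_smul, ← pow_mul, Fintype.card_fin]
    rw [h2, norm_mul, Padic.norm_p_pow, Padic.norm_eq_zpow_neg_valuation hdet,
      ← zpow_add₀ (ne_of_gt hppos)] at h1
    have h3 : ((p : ℝ)) ^ (-(s * n : ℕ) + -(M₀ * X).det.valuation : ℤ) ≤ ((p : ℝ)) ^ (0 : ℤ) := by
      rw [zpow_zero]
      exact h1
    have h4 := (zpow_le_zpow_iff_right₀ one_lt_p_real).mp h3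
    omega
  set P : ℤ → Prop := fun v => ∃ X : Matrix (Fin n ⊕ Fin n) (Fin n) ℚ_[p],
    MInt X ∧ (M₀ * X).det ≠ 0 ∧ ((M₀ * X).det).valuation = v with hP
  obtain ⟨X₁, hX₁, hX₁d⟩ := hex
  obtain ⟨lb, hlb, hmin⟩ := Int.exists_least_of_bdd (P := P)
    ⟨-(s * n : ℕ), fun z hz => by obtain ⟨X, h1, h2, h3⟩ := hz; exact h3 ▸ hbdd X h1 h2⟩
    ⟨((M₀ * X₁).det).valuation, X₁, hX₁, hX₁d, rfl⟩
  obtain ⟨X, hXi, hXd, hXv⟩ := hlb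
  refine ⟨X, hXi, hXd, ?_⟩
  intro X' hX'
  change ‖Matrix.det (M₀ * X')‖ ≤ _
  by_cases h0 : Matrix.det (M₀ * X') = 0
  · rw [h0, norm_zero]
    exact norm_nonneg _
  · have hv' : lb ≤ ((M₀ * X').det).valuation := hmin _ ⟨X', hX', h0, rfl⟩
    rw [Padic.norm_eq_zpow_neg_valuation h0, Padic.norm_eq_zpow_neg_valuation hXd, hXv]
    exact zpow_le_zpow_right₀ (le_of_lt one_lt_p_real) (by omega)

/-- Key integrality: if `X₀` maximizes `‖det (M₀ * X)‖` then `(M₀ * X₀)⁻¹ * M₀` is integral. -/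
lemma maximizer_integral (M₀ : Matrix (Fin n) (Fin n ⊕ Fin n) ℚ_[p])
    (X₀ : Matrix (Fin n ⊕ Fin n) (Fin n) ℚ_[p]) (hX₀ : MInt X₀) (hdet : (M₀ * X₀).det ≠ 0)
    (hmax : ∀ X, MInt X → ‖(M₀ * X).det‖ ≤ ‖(M₀ * X₀).det‖) :
    MInt ((M₀ * X₀)⁻¹ * M₀) := by
  classical
  set E := M₀ * X₀ with hE
  intro i j
  set w : Fin n → ℚ_[p] := fun a => M₀ a j with hw
  set X' := X₀.updateCol i (fun r => if r = j then (1 : ℚ_[p]) else 0) with hX'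
  have hX'int : MInt X' := by
    intro a b
    rw [hX', Matrix.updateCol_apply]
    split
    · split <;> simp
    · exact hX₀ a b
  have hcol : M₀ * X' = E.updateCol i w := by
    ext a b
    by_cases hb : b = i
    · subst hb
      simp [hX', hw, hE, Matrix.mul_apply, Matrix.updateCol_apply, mul_ite,
        Finset.sum_ite_eq']
    · simp [hX', hE, Matrix.mul_apply, Matrix.updateCol_apply, hb]
  have hadj : (E.adjugate * M₀) i j = (M₀ * X').det := by
    rw [hcol, ← Matrix.cramer_apply, Matrix.cramer_eq_adjugate_mulVec]
    simp [Matrix.mul_apply, Matrix.mulVec, dotProduct, hw]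
  have hentry : (E⁻¹ * M₀) i j = Ring.inverse E.det * ((E.adjugate * M₀) i j) := by
    rw [Matrix.inv_def, Matrix.smul_mul, Matrix.smul_apply, smul_eq_mul]
  rw [hentry, hadj, Ring.inverse_eq_inv', norm_mul, norm_inv]
  have hEn : ‖E.det‖ ≠ 0 := by
    simpa using hdet
  calc ‖E.det‖⁻¹ * ‖(M₀ * X').det‖ ≤ ‖E.det‖⁻¹ * ‖E.det‖ := by
        exact mul_le_mul_of_nonneg_left (hmax X' hX'int) (inv_nonneg.mpr (norm_nonneg _))
    _ = 1 := inv_mul_cancel₀ hEn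

end Maximizer

section Reduction

variable {p : ℕ} [hp : Fact p.Prime] {n : ℕ}

/-- Every isotropic `n × 2n` matrix of full rank is, up to an invertible factor,
the bottom row block of an integral symplectic matrix. -/
lemma exists_k0 (M₀ : Matrix (Fin n) (Fin n ⊕ Fin n) ℚ_[p])
    (hiso : bform M₀ M₀ = 0)
    (hex : ∃ X : Matrix (Fin n ⊕ Fin n) (Fin n) ℚ_[p], MInt X ∧ (M₀ * X).det ≠ 0) :
    ∃ (k : Matrix (Fin n ⊕ Fin n) (Fin n ⊕ Fin n) ℚ_[p]) (E : Matrix (Fin n) (Fin n) ℚ_[p]),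
      k ∈ Sp ℚ_[p] n ∧ MInt k ∧ E.det ≠ 0 ∧ M₀ = E * (Rmat ℚ_[p] n * k) := by
  classical
  obtain ⟨X₀, hX₀, hdet, hmax⟩ := exists_max_norm_det M₀ hex
  set E := M₀ * X₀ with hE
  have hdetE : E.det ≠ 0 := hdet
  have hEunit : IsUnit E.det := isUnit_iff_ne_zero.mpr hdetE
  set M := E⁻¹ * M₀ with hM
  have hMint : MInt M := maximizer_integral M₀ X₀ hX₀ hdet hmax
  have hEM : E * M = M₀ := by
    rw [hM, ← Matrix.mul_assoc, Matrix.mul_nonsing_inv E hEunit, Matrix.one_mul]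
  have hMY : M * X₀ = 1 := by
    rw [hM, Matrix.mul_assoc, ← hE, Matrix.nonsing_inv_mul E hEunit]
  have hMiso : bform M M = 0 := by
    rw [hM, bform_smul_left, bform_smul_right, hiso, Matrix.zero_mul, Matrix.mul_zero]
  set N₀ := X₀ᵀ * Jinv ℚ_[p] n with hN₀
  have hN₀int : MInt N₀ := mInt_mul (mInt_transpose hX₀) mInt_Jinv
  have hMN₀ : bform M N₀ = 1 := by
    rw [bform, hN₀, transpose_mul, Jinv_transpose, transpose_transpose]
    rw [show M * Jinv ℚ_[p] n * (Jmat ℚ_[p] n * X₀)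
        = M * (Jinv ℚ_[p] n * Jmat ℚ_[p] n) * X₀ by simp only [Matrix.mul_assoc],
      Jinv_mul_J, Matrix.mul_one, hMY]
  have hN₀M : bform N₀ M = -1 := by
    have h1 := bform_transpose M N₀
    rw [hMN₀, transpose_one] at h1
    have h2 := congrArg Neg.neg h1
    rw [neg_neg] at h2
    rw [← h2]
  set T := bform N₀ N₀ with hT
  have hTint : MInt T := by
    rw [hT, bform]
    exact mInt_mul (mInt_mul hN₀int mInt_Jinv) (mInt_transpose hN₀int)
  have hTt : Tᵀ = -T := by
    rw [hT, bform_transpose]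
  have hTanti : ∀ a b, T b a = -T a b := by
    intro a b
    have := congrFun (congrFun hTt a) b
    simpa [Matrix.transpose_apply, Matrix.neg_apply] using this
  have hTdiag : ∀ a, T a a = 0 := by
    intro a
    exact add_self_eq_zero.mp (by nth_rewrite 2 [hTanti a a]; exact add_neg_cancel _)
  set S : Matrix (Fin n) (Fin n) ℚ_[p] :=
    Matrix.of fun a b : Fin n => if (b : ℕ) < (a : ℕ) then -T a b else 0 with hSdef
  have hSint : MInt S := by
    intro a b
    rw [hSdef, Matrix.of_apply]
    split
    · rw [norm_neg]; exact hTint a b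
    · simp
  have hS : S - Sᵀ = -T := by
    ext a b
    rw [Matrix.sub_apply, Matrix.transpose_apply, Matrix.neg_apply, hSdef,
      Matrix.of_apply, Matrix.of_apply]
    rcases lt_trichotomy ((a : ℕ)) ((b : ℕ)) with h | h | h
    · rw [if_neg (by omega), if_pos h, hTanti a b]
      ring
    · have hab : a = b := Fin.ext h
      subst hab
      simp [hTdiag a]
    · rw [if_pos h, if_neg (by omega)]
      ring
  set N := N₀ + S * M with hN
  have hNint : MInt N := mInt_add hN₀int (mInt_mul hSint hMint)
  have hMN : bform M N = 1 := by
    rw [hN, bform_add_right, hMN₀, bform_smul_right, hMiso, Matrix.zero_mul, add_zero]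
  have hNM : bform N M = -1 := by
    rw [hN, bform_add_left, hN₀M, bform_smul_left, hMiso, Matrix.mul_zero, add_zero]
  have hNN : bform N N = 0 := by
    rw [hN, bform_add_left N₀ (S * M) (N₀ + S * M),
      bform_add_right N₀ N₀ (S * M), bform_add_right (S * M) N₀ (S * M),
      bform_smul_right S N₀ M, bform_smul_left S M N₀, bform_smul_left S M (S * M),
      bform_smul_right S M M, hMN₀, hN₀M, hMiso, ← hT]
    rw [Matrix.zero_mul, Matrix.mul_zero, Matrix.mul_one, add_zero, neg_one_mul]
    have hT2 : Sᵀ - S = T := by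
      have := congrArg Neg.neg hS
      rw [neg_neg, neg_sub] at this
      exact this
    rw [← hT2]
    abel
  set k := fromRows N M with hk
  have hkJ : bform k k = Jinv ℚ_[p] n := by
    rw [hk, bform, transpose_fromRows, fromRows_mul, fromRows_mul_fromCols]
    rw [show N * Jinv ℚ_[p] n * Nᵀ = bform N N from rfl,
      show N * Jinv ℚ_[p] n * Mᵀ = bform N M from rfl,
      show M * Jinv ℚ_[p] n * Nᵀ = bform M N from rfl,
      show M * Jinv ℚ_[p] n * Mᵀ = bform M M from rfl, hNN, hNM, hMN, hMiso, Jinv]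
  refine ⟨k, E, mem_sp_iff_bform.mpr hkJ, mInt_fromRows hNint hMint, hdetE, ?_⟩
  rw [hk, Rmat, fromCols_mul_fromRows, Matrix.zero_mul, Matrix.one_mul, zero_add, hEM]

end Reduction

section CharAndMain

variable {p : ℕ} [hp : Fact p.Prime] {n : ℕ}

lemma det_diag_ite {F : Type*} [Field F] [NeZero n] (x : F) :
    (diagonal (fun i : Fin n => if (i : ℕ) = 0 then x else 1)).det = x := by
  classical
  rw [det_diagonal]
  have h1 : ∀ i : Fin n, (if (i : ℕ) = 0 then x else 1) = (if i = (0 : Fin n) then x else 1) := by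
    intro i
    by_cases h : i = 0
    · simp [h]
    · rw [if_neg h, if_neg (fun hv => h (Fin.ext (by simp [hv])))]
  simp_rw [h1]
  rw [Finset.prod_ite_eq' Finset.univ (0 : Fin n) (fun _ => x), if_pos (Finset.mem_univ _)]

lemma mInt_Rmat : MInt (Rmat ℚ_[p] n) := mInt_fromColumns mInt_zero mInt_one

lemma Rmat_mul_apply {m : Type*} (C : Matrix (Fin n ⊕ Fin n) m ℚ_[p]) (i : Fin n) (j : m) :
    (Rmat ℚ_[p] n * C) i j = C (Sum.inr i) j := by
  rw [Rmat, Matrix.mul_apply, Fintype.sum_sum_type]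
  simp [fromCols, Matrix.one_apply, Finset.sum_ite_eq]

/-- `Rmat * Rmatᵀ = 1`. -/
lemma Rmat_mul_transpose : Rmat ℚ_[p] n * (Rmat ℚ_[p] n)ᵀ = 1 := by
  rw [Rmat, transpose_fromCols, transpose_zero, transpose_one, fromCols_mul_fromRows]
  simp

/-- Commutation of `Rmat` past an upper block triangular matrix. -/
lemma Rmat_mul_blockTriangular (A B D : Matrix (Fin n) (Fin n) ℚ_[p]) :
    Rmat ℚ_[p] n * fromBlocks A B 0 D = D * Rmat ℚ_[p] n := by
  rw [Rmat, fromCols_mul_fromBlocks, mul_fromCols]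
  simp

/-- The second diagonal block of `cMat`. -/
noncomputable def D2 (p : ℕ) [Fact p.Prime] (n : ℕ) (c : ℤ) : Matrix (Fin n) (Fin n) ℚ_[p] :=
  diagonal (fun i : Fin n => if (i : ℕ) = 0 then (p : ℚ_[p]) ^ c else 1)

lemma cMat_eq_fromBlocks (c : ℤ) :
    cMat ℚ_[p] n (p : ℚ_[p]) c = fromBlocks
      (diagonal (fun i : Fin n => if (i : ℕ) = 0 then (p : ℚ_[p]) ^ (-c) else 1)) 0 0
      (D2 p n c) := by
  rw [cMat, D2, fromBlocks_diagonal]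

lemma Rmat_mul_cMat (c : ℤ) :
    Rmat ℚ_[p] n * cMat ℚ_[p] n (p : ℚ_[p]) c = D2 p n c * Rmat ℚ_[p] n := by
  rw [cMat_eq_fromBlocks]
  exact Rmat_mul_blockTriangular _ _ _

/-- Characterization of the exponent `c` in a double coset decomposition. -/
lemma decomp_char [NeZero n] {g q k : Matrix (Fin n ⊕ Fin n) (Fin n ⊕ Fin n) ℚ_[p]} {c : ℤ}
    (hq : q ∈ SiegelPP ℚ_[p] n) (hk : k ∈ Sp ℚ_[p] n) (hkint : MInt k)
    (hgd : g = q * cMat ℚ_[p] n (p : ℚ_[p]) c * k) :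
    (∀ X, MInt X → ‖(Rmat ℚ_[p] n * g * X).det‖ ≤ (p : ℝ) ^ (-c)) ∧
      (∃ X, MInt X ∧ ‖(Rmat ℚ_[p] n * g * X).det‖ = (p : ℝ) ^ (-c)) := by
  classical
  obtain ⟨hqSp, A₀, B₀, hqform, hdetA₀⟩ := hq
  have h1 : Rmat ℚ_[p] n * q = A₀ᵀ⁻¹ * Rmat ℚ_[p] n := by
    rw [hqform]
    exact Rmat_mul_blockTriangular _ _ _
  have hRg : Rmat ℚ_[p] n * g = A₀ᵀ⁻¹ * (D2 p n c * (Rmat ℚ_[p] n * k)) := by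
    rw [hgd, show Rmat ℚ_[p] n * (q * cMat ℚ_[p] n (p : ℚ_[p]) c * k)
        = Rmat ℚ_[p] n * q * cMat ℚ_[p] n (p : ℚ_[p]) c * k by simp only [Matrix.mul_assoc],
      h1, Matrix.mul_assoc A₀ᵀ⁻¹, Rmat_mul_cMat]
    simp only [Matrix.mul_assoc]
  have hdetE₀ : (A₀ᵀ⁻¹).det = 1 := by
    rw [Matrix.det_nonsing_inv, det_transpose, hdetA₀, Ring.inverse_one]
  have hdetD2 : (D2 p n c).det = (p : ℚ_[p]) ^ c := det_diag_ite _
  have hdet_fact : ∀ X : Matrix (Fin n ⊕ Fin n) (Fin n) ℚ_[p],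
      (Rmat ℚ_[p] n * g * X).det = (p : ℚ_[p]) ^ c * (Rmat ℚ_[p] n * k * X).det := by
    intro X
    rw [hRg, show A₀ᵀ⁻¹ * (D2 p n c * (Rmat ℚ_[p] n * k)) * X
        = A₀ᵀ⁻¹ * (D2 p n c * (Rmat ℚ_[p] n * k * X)) by simp only [Matrix.mul_assoc],
      Matrix.det_mul, Matrix.det_mul, hdetE₀, hdetD2, one_mul]
  constructor
  · intro X hX
    change ‖Matrix.det (Rmat ℚ_[p] n * g * X)‖ ≤ _
    rw [hdet_fact X, norm_mul, Padic.norm_p_zpow]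
    have hint : ‖(Rmat ℚ_[p] n * k * X).det‖ ≤ 1 :=
      mInt_det (mInt_mul (mInt_mul mInt_Rmat hkint) hX)
    calc (p : ℝ) ^ (-c) * ‖(Rmat ℚ_[p] n * k * X).det‖ ≤ (p : ℝ) ^ (-c) * 1 :=
          mul_le_mul_of_nonneg_left hint (le_of_lt (zpow_pos (lt_trans zero_lt_one
            one_lt_p_real) _))
      _ = (p : ℝ) ^ (-c) := mul_one _
  · refine ⟨spInv k * (Rmat ℚ_[p] n)ᵀ, mInt_mul (mInt_spInv hkint)
      (mInt_transpose mInt_Rmat), ?_⟩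
    have hRkX : Rmat ℚ_[p] n * k * (spInv k * (Rmat ℚ_[p] n)ᵀ) = 1 := by
      rw [show Rmat ℚ_[p] n * k * (spInv k * (Rmat ℚ_[p] n)ᵀ)
          = Rmat ℚ_[p] n * (k * spInv k) * (Rmat ℚ_[p] n)ᵀ by simp only [Matrix.mul_assoc],
        sp_mul_spInv hk, Matrix.mul_one, Rmat_mul_transpose]
    change ‖Matrix.det (Rmat ℚ_[p] n * g * (spInv k * (Rmat ℚ_[p] n)ᵀ))‖ = _
    rw [hdet_fact _, hRkX, Matrix.det_one, mul_one, Padic.norm_p_zpow]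

end CharAndMain

end PadicIwasawaAux


open PadicIwasawaAux in
/-- Iwasawa-type decomposition: every `g ∈ Sp_{2n}(ℚ_p)` lies in exactly one double coset
`[P,P](ℚ_p) · c(p) · Sp_{2n}(ℤ_p)`, `c ∈ ℤ`; i.e., `g = q · c(p) · k` with
`q ∈ [P,P](ℚ_p)`, `k ∈ Sp_{2n}(ℤ_p)`, and the integer `c` is uniquely determined by `g`. -/
theorem padic_iwasawa_double_coset (p : ℕ) [Fact p.Prime] (n : ℕ) (hn : 1 ≤ n)
    (g : Matrix (Fin n ⊕ Fin n) (Fin n ⊕ Fin n) ℚ_[p]) (hg : g ∈ Sp ℚ_[p] n) :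
    ∃! c : ℤ, ∃ q ∈ SiegelPP ℚ_[p] n, ∃ k ∈ Sp ℚ_[p] n,
      (∀ i j, ‖k i j‖ ≤ 1) ∧ g = q * cMat ℚ_[p] n (p : ℚ_[p]) c * k := by
  classical
  haveI : NeZero n := ⟨by omega⟩
  have hpne : (p : ℚ_[p]) ≠ 0 := Nat.cast_ne_zero.mpr (Fact.out (p := p.Prime)).ne_zero
  set M₀ := Rmat ℚ_[p] n * g with hM₀
  have hgJ : bform g g = Jinv ℚ_[p] n := mem_sp_iff_bform.mp hg
  -- the bottom row block is isotropic
  have hiso : bform M₀ M₀ = 0 := by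
    rw [hM₀, bform_smul_left (Rmat ℚ_[p] n) g (Rmat ℚ_[p] n * g),
      bform_smul_right (Rmat ℚ_[p] n) g g, hgJ]
    rw [Rmat, transpose_fromCols, transpose_zero, transpose_one, Jinv,
      fromBlocks_mul_fromRows, fromCols_mul_fromRows]
    simp
  -- some integral X with det (M₀ * X) ≠ 0
  have hex : ∃ X : Matrix (Fin n ⊕ Fin n) (Fin n) ℚ_[p], MInt X ∧ (M₀ * X).det ≠ 0 := by
    set Xb := spInv g * (Rmat ℚ_[p] n)ᵀ with hXb
    have hXb1 : M₀ * Xb = 1 := by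
      rw [hM₀, hXb, show Rmat ℚ_[p] n * g * (spInv g * (Rmat ℚ_[p] n)ᵀ)
          = Rmat ℚ_[p] n * (g * spInv g) * (Rmat ℚ_[p] n)ᵀ by simp only [Matrix.mul_assoc],
        sp_mul_spInv hg, Matrix.mul_one, Rmat_mul_transpose]
    obtain ⟨s, hs⟩ := exists_smul_mInt Xb
    refine ⟨((p : ℚ_[p]) ^ s) • Xb, hs, ?_⟩
    rw [Matrix.mul_smul, hXb1, Matrix.det_smul, Matrix.det_one, mul_one]
    exact pow_ne_zero _ (pow_ne_zero _ hpne)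
  obtain ⟨k₀, E, hk₀Sp, hk₀int, hdetE, hM₀E⟩ := exists_k0 M₀ hiso hex
  set pm := g * spInv k₀ with hpm
  have hpmSp : pm ∈ Sp ℚ_[p] n := sp_mul hg (spInv_mem_sp hk₀Sp)
  have hRpm : Rmat ℚ_[p] n * pm = fromCols 0 E := by
    rw [hpm, ← Matrix.mul_assoc, ← hM₀, hM₀E,
      show E * (Rmat ℚ_[p] n * k₀) * spInv k₀ = E * (Rmat ℚ_[p] n * (k₀ * spInv k₀)) by
        simp only [Matrix.mul_assoc],
      sp_mul_spInv hk₀Sp, Matrix.mul_one, Rmat, mul_fromCols, Matrix.mul_zero,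
      Matrix.mul_one]
  set A := pm.toBlocks₁₁ with hA
  set B := pm.toBlocks₁₂ with hB
  have hpmblocks : pm = fromBlocks A B 0 E := by
    have h21 : pm.toBlocks₂₁ = 0 := by
      ext i j
      have h := congrFun (congrFun hRpm i) (Sum.inl j)
      rw [Rmat_mul_apply] at h
      simpa [Matrix.toBlocks₂₁, fromCols] using h
    have h22 : pm.toBlocks₂₂ = E := by
      ext i j
      have h := congrFun (congrFun hRpm i) (Sum.inr j)
      rw [Rmat_mul_apply] at h
      simpa [Matrix.toBlocks₂₂, fromCols] using h
    conv_lhs => rw [← fromBlocks_toBlocks pm]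
    rw [h21, h22]
  -- symplectic condition forces E * Aᵀ = 1
  have hpmJ : bform pm pm = Jinv ℚ_[p] n := mem_sp_iff_bform.mp hpmSp
  have hEA : E * Aᵀ = 1 := by
    rw [hpmblocks, bform, fromBlocks_transpose, Jinv, fromBlocks_multiply,
      fromBlocks_multiply] at hpmJ
    have h := congrArg Matrix.toBlocks₂₁ hpmJ
    simpa [Matrix.toBlocks_fromBlocks₂₁] using h
  have hdetA_ne : A.det ≠ 0 := by
    have h := congrArg Matrix.det hEA
    rw [Matrix.det_mul, Matrix.det_transpose, Matrix.det_one] at h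
    intro h0
    rw [h0, mul_zero] at h
    exact zero_ne_one h
  -- split off the determinant along a diagonal torus element
  set d : Fin n → ℚ_[p] := fun i => if (i : ℕ) = 0 then A.det else 1 with hd
  set d' : Fin n → ℚ_[p] := fun i => if (i : ℕ) = 0 then (A.det)⁻¹ else 1 with hd'
  have hdd' : ∀ i, d i * d' i = 1 := by
    intro i
    rw [hd, hd']
    by_cases h : (i : ℕ) = 0 <;> simp [h, mul_inv_cancel₀ hdetA_ne]
  have hd'd : ∀ i, d' i * d i = 1 := fun i => by rw [mul_comm]; exact hdd' i
  have hdiag1 : diagonal d * diagonal d' = 1 := by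
    rw [diagonal_mul_diagonal, show (fun i => d i * d' i) = fun _ => (1 : ℚ_[p]) from
      funext hdd']
    exact diagonal_one
  have hdiag2 : diagonal d' * diagonal d = 1 := by
    rw [diagonal_mul_diagonal, show (fun i => d' i * d i) = fun _ => (1 : ℚ_[p]) from
      funext hd'd]
    exact diagonal_one
  set D := fromBlocks (diagonal d) 0 0 (diagonal d') with hD
  set Dinv := fromBlocks (diagonal d') 0 0 (diagonal d) with hDinv
  have hDinvSp : Dinv ∈ Sp ℚ_[p] n := sp_diag_pair hd'd
  have hDinvD : Dinv * D = 1 := by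
    rw [hD, hDinv, fromBlocks_multiply]
    simp only [Matrix.mul_zero, Matrix.zero_mul, add_zero, zero_add, hdiag1, hdiag2]
    exact fromBlocks_one
  set q := pm * Dinv with hq
  have hqSp : q ∈ Sp ℚ_[p] n := sp_mul hpmSp hDinvSp
  have hqform : q = fromBlocks (A * diagonal d') (B * diagonal d) 0 (E * diagonal d) := by
    rw [hq, hpmblocks, hDinv, fromBlocks_multiply]
    simp
  set A' := A * diagonal d' with hA'
  have hA'T : A'ᵀ⁻¹ = E * diagonal d := by
    refine Matrix.inv_eq_left_inv ?_
    rw [hA', transpose_mul, diagonal_transpose,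
      show E * diagonal d * (diagonal d' * Aᵀ) = E * (diagonal d * diagonal d') * Aᵀ by
        simp only [Matrix.mul_assoc],
      hdiag1, Matrix.mul_one, hEA]
  have hdetd' : (diagonal d').det = (A.det)⁻¹ := det_diag_ite _
  have hdetA' : A'.det = 1 := by
    rw [hA', Matrix.det_mul, hdetd', mul_inv_cancel₀ hdetA_ne]
  have hqPP : q ∈ SiegelPP ℚ_[p] n := by
    refine ⟨hqSp, A', B * diagonal d, ?_, hdetA'⟩
    rw [hqform, hA'T]
  -- decompose the torus element
  set c : ℤ := -(A.det.valuation) with hc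
  set u : ℚ_[p] := (p : ℚ_[p]) ^ c * A.det with hu_def
  have hu : ‖u‖ = 1 := by
    rw [hu_def, norm_mul, Padic.norm_p_zpow, Padic.norm_eq_zpow_neg_valuation hdetA_ne,
      ← zpow_add₀ (ne_of_gt (lt_trans zero_lt_one (one_lt_p_real (p := p))))]
    rw [show -c + -A.det.valuation = 0 by omega, zpow_zero]
  have hune : u ≠ 0 := mul_ne_zero (zpow_ne_zero _ hpne) hdetA_ne
  set w : Fin n → ℚ_[p] := fun i => if (i : ℕ) = 0 then u else 1 with hw
  set w' : Fin n → ℚ_[p] := fun i => if (i : ℕ) = 0 then u⁻¹ else 1 with hw'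
  have hww' : ∀ i, w i * w' i = 1 := by
    intro i
    rw [hw, hw']
    by_cases h : (i : ℕ) = 0 <;> simp [h, mul_inv_cancel₀ hune]
  set U := fromBlocks (diagonal w) 0 0 (diagonal w') with hU
  have hUSp : U ∈ Sp ℚ_[p] n := sp_diag_pair hww'
  have hUint : MInt U := by
    refine mInt_fromBlocks (mInt_diagonal ?_) mInt_zero mInt_zero (mInt_diagonal ?_)
    · intro i
      rw [hw]
      by_cases h : (i : ℕ) = 0 <;> simp [h, hu]
    · intro i
      rw [hw']
      by_cases h : (i : ℕ) = 0 <;> simp [h, norm_inv, hu]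
  have hcU : cMat ℚ_[p] n (p : ℚ_[p]) c * U = D := by
    rw [cMat_eq_fromBlocks, hU, hD, fromBlocks_multiply]
    simp only [D2, Matrix.mul_zero, Matrix.zero_mul, add_zero, zero_add,
      diagonal_mul_diagonal]
    have e1 : (fun i : Fin n =>
        (if (i : ℕ) = 0 then (p : ℚ_[p]) ^ (-c) else 1) * w i) = d := by
      funext i
      by_cases h : (i : ℕ) = 0
      · simp only [hw, hd, if_pos h]
        rw [hu_def, ← mul_assoc, ← zpow_add₀ hpne, neg_add_cancel, zpow_zero, one_mul]
      · simp only [hw, hd, if_neg h, mul_one]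
    have e2 : (fun i : Fin n =>
        (if (i : ℕ) = 0 then (p : ℚ_[p]) ^ c else 1) * w' i) = d' := by
      funext i
      by_cases h : (i : ℕ) = 0
      · simp only [hw', hd', if_pos h]
        rw [hu_def, mul_inv, ← mul_assoc, mul_inv_cancel₀ (zpow_ne_zero _ hpne), one_mul]
      · simp only [hw', hd', if_neg h, mul_one]
    rw [e1, e2]
  set k := U * k₀ with hk
  have hkSp : k ∈ Sp ℚ_[p] n := sp_mul hUSp hk₀Sp
  have hkint : MInt k := mInt_mul hUint hk₀int
  have hgdec : g = q * cMat ℚ_[p] n (p : ℚ_[p]) c * k := by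
    rw [hq, hk]
    calc g = pm * k₀ := by
          rw [hpm, Matrix.mul_assoc, spInv_mul_sp hk₀Sp, Matrix.mul_one]
    _ = pm * (Dinv * (cMat ℚ_[p] n (p : ℚ_[p]) c * U)) * k₀ := by
          rw [hcU, hDinvD, Matrix.mul_one]
    _ = pm * Dinv * cMat ℚ_[p] n (p : ℚ_[p]) c * (U * k₀) := by
          simp only [Matrix.mul_assoc]
  refine ⟨c, ⟨q, hqPP, k, hkSp, hkint, hgdec⟩, ?_⟩
  intro y hy
  obtain ⟨q', hq', k', hk'Sp, hk'int, hgd'⟩ := hy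
  have h1 := decomp_char hq' hk'Sp hk'int hgd'
  have h2 := decomp_char hqPP hkSp hkint hgdec
  obtain ⟨X1, hX1int, hX1⟩ := h1.2
  obtain ⟨X2, hX2int, hX2⟩ := h2.2
  have hle1 : (p : ℝ) ^ (-y) ≤ (p : ℝ) ^ (-c) := hX1 ▸ h2.1 X1 hX1int
  have hle2 : (p : ℝ) ^ (-c) ≤ (p : ℝ) ^ (-y) := hX2 ▸ h1.1 X2 hX2int
  have := (zpow_le_zpow_iff_right₀ (one_lt_p_real (p := p))).mp hle1
  have := (zpow_le_zpow_iff_right₀ (one_lt_p_real (p := p))).mp hle2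
  omega
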